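/- Under the setting of the inexact-cut proposition for a convex nonlinear value function, assume additionally that Y is compact with diameter D(Y), that ∇_y f(·,x) is M₁-Lipschitz on Y uniformly in x ∈ X, and that each ∇_y g_i(·,x) is M₂-Lipschitz on Y uniformly in x ∈ X. Let L̄ be any lower bound on Q(x̄), let U = (f(y_{x̄}, x̄) − L̄ + ε)/min_i(−g_i(y_{x̄}, x̄)) and M₃ = M₁ + U·M₂, and write ℓ = max_{y ∈ Y} ⟨∇_y L_{x̄}(ŷ, λ̂, μ̂), ŷ − y⟩. Then Q(x̄) − C(x̄) ≤ ε + ℓ − ℓ²/(2 M₃ D(Y)²) when ℓ ≤ M₃ D(Y)², and Q(x̄) − C(x̄) ≤ ε + ℓ/2 otherwise. -/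

import Mathlib

open Matrix
open scoped RealInnerProductSpace

/-- Lagrangian L_x(y, λ, μ) = f(y,x) + λᵀ(Bx + Ay − b) + μᵀ g(y,x). -/
noncomputable def stmt2Lagr {n m q p : ℕ}
    (A : Matrix (Fin q) (Fin n) ℝ) (B : Matrix (Fin q) (Fin m) ℝ) (b : Fin q → ℝ)
    (f : EuclideanSpace ℝ (Fin n) → EuclideanSpace ℝ (Fin m) → ℝ)
    (g : EuclideanSpace ℝ (Fin n) → EuclideanSpace ℝ (Fin m) → Fin p → ℝ)
    (lam : Fin q → ℝ) (mu : Fin p → ℝ)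
    (y : EuclideanSpace ℝ (Fin n)) (x : EuclideanSpace ℝ (Fin m)) : ℝ :=
  f y x + lam ⬝ᵥ ((B *ᵥ x + A *ᵥ y - b : Fin q → ℝ)) + mu ⬝ᵥ g y x

set_option maxHeartbeats 2000000 in
/-- Refined bound on the inexactness of the cut (Proposition 2.3). -/
theorem stmt_2 {n m q p : ℕ} [NeZero p]
    (X : Set (EuclideanSpace ℝ (Fin m))) (hXne : X.Nonempty)
    (hXcomp : IsCompact X) (hXconv : Convex ℝ X)
    (Y : Set (EuclideanSpace ℝ (Fin n))) (hYne : Y.Nonempty)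
    (hYcomp : IsCompact Y) (hYconv : Convex ℝ Y)
    (A : Matrix (Fin q) (Fin n) ℝ) (B : Matrix (Fin q) (Fin m) ℝ) (b : Fin q → ℝ)
    (f : EuclideanSpace ℝ (Fin n) → EuclideanSpace ℝ (Fin m) → ℝ)
    (g : EuclideanSpace ℝ (Fin n) → EuclideanSpace ℝ (Fin m) → Fin p → ℝ)
    (hfconv : ConvexOn ℝ Set.univ
      (fun z : EuclideanSpace ℝ (Fin n) × EuclideanSpace ℝ (Fin m) => f z.1 z.2))
    (hgconv : ∀ i, ConvexOn ℝ Set.univ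
      (fun z : EuclideanSpace ℝ (Fin n) × EuclideanSpace ℝ (Fin m) => g z.1 z.2 i))
    (hfdiff : Differentiable ℝ
      (fun z : EuclideanSpace ℝ (Fin n) × EuclideanSpace ℝ (Fin m) => f z.1 z.2))
    (hgdiff : ∀ i, Differentiable ℝ
      (fun z : EuclideanSpace ℝ (Fin n) × EuclideanSpace ℝ (Fin m) => g z.1 z.2 i))
    -- (H4): ∇_y f(·,x) is M₁-Lipschitz on Y, uniformly in x ∈ X:
    (M₁ : ℝ) (hM₁ : 0 < M₁)
    (hfgradlip : ∀ x ∈ X, ∀ y₁ ∈ Y, ∀ y₂ ∈ Y,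
      ‖gradient (fun y => f y x) y₂ - gradient (fun y => f y x) y₁‖ ≤ M₁ * ‖y₂ - y₁‖)
    -- (H5): each ∇_y g_i(·,x) is M₂-Lipschitz on Y, uniformly in x ∈ X:
    (M₂ : ℝ) (hM₂ : 0 < M₂)
    (hggradlip : ∀ i, ∀ x ∈ X, ∀ y₁ ∈ Y, ∀ y₂ ∈ Y,
      ‖gradient (fun y => g y x i) y₂ - gradient (fun y => g y x i) y₁‖ ≤ M₂ * ‖y₂ - y₁‖)
    -- Slater condition, with Slater point y_x̄ at x̄:
    (hslater : ∀ x ∈ X, ∃ y ∈ intrinsicInterior ℝ Y,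
      A *ᵥ y + B *ᵥ x = b ∧ ∀ i, g y x i < 0)
    (Q : EuclideanSpace ℝ (Fin m) → ℝ)
    (hQ : ∀ x ∈ X, IsGLB {v : ℝ | ∃ y ∈ Y,
      A *ᵥ y + B *ᵥ x = b ∧ (∀ i, g y x i ≤ 0) ∧ v = f y x} (Q x))
    (xbar : EuclideanSpace ℝ (Fin m)) (hxbar : xbar ∈ X)
    (yx : EuclideanSpace ℝ (Fin n)) (hyx : yx ∈ intrinsicInterior ℝ Y)
    (hyxfeas : A *ᵥ yx + B *ᵥ xbar = b) (hyxstrict : ∀ i, g yx xbar i < 0)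
    (ε : ℝ) (hε : 0 ≤ ε)
    -- ε-optimal feasible primal solution ŷ at x̄:
    (yhat : EuclideanSpace ℝ (Fin n)) (hyhatY : yhat ∈ Y)
    (hyhatfeas : A *ᵥ yhat + B *ᵥ xbar = b ∧ ∀ i, g yhat xbar i ≤ 0)
    (hyhatopt : f yhat xbar ≤ Q xbar + ε)
    -- ε-optimal feasible dual solution (λ̂, μ̂) at x̄:
    (lam : Fin q → ℝ) (mu : Fin p → ℝ) (hmu : 0 ≤ mu)
    (hdualopt : ∀ y ∈ Y, stmt2Lagr A B b f g lam mu y xbar ≥ Q xbar - ε)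
    -- ℓ = max_{y ∈ Y} ⟨∇_y L_x̄(ŷ, λ̂, μ̂), ŷ − y⟩:
    (ℓ : ℝ)
    (hℓ : IsLUB {v : ℝ | ∃ y ∈ Y,
      v = ⟪gradient (fun y' => stmt2Lagr A B b f g lam mu y' xbar) yhat, yhat - y⟫} ℓ)
    -- L̄ is any lower bound on Q(x̄):
    (Lbar : ℝ) (hLbar : Lbar ≤ Q xbar)
    -- U = (f(y_x̄, x̄) − L̄ + ε) / min_i (−g_i(y_x̄, x̄)) and M₃ = M₁ + U M₂:
    (U M₃ : ℝ)
    (hU : U = (f yx xbar - Lbar + ε) /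
      (Finset.univ.inf' Finset.univ_nonempty (fun i => -(g yx xbar i))))
    (hM₃ : M₃ = M₁ + U * M₂) :
    Q xbar - (stmt2Lagr A B b f g lam mu yhat xbar - ℓ) ≤
      if ℓ ≤ M₃ * Metric.diam Y ^ 2 then
        ε + ℓ - ℓ ^ 2 / (2 * M₃ * Metric.diam Y ^ 2)
      else ε + ℓ / 2 := by
    classical
  have hyxY : yx ∈ Y := intrinsicInterior_subset hyx
  set L' : EuclideanSpace ℝ (Fin n) → ℝ := fun y => stmt2Lagr A B b f g lam mu y xbar with hL'def
  set c : EuclideanSpace ℝ (Fin n) := (WithLp.equiv 2 (Fin n → ℝ)).symm (A.vecMul lam) with hcdef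
  set k : ℝ := lam ⬝ᵥ (B *ᵥ xbar - b) with hkdef
  have hinner : ∀ z : EuclideanSpace ℝ (Fin n), ⟪c, z⟫ = (A.vecMul lam) ⬝ᵥ (z : Fin n → ℝ) := by
    intro z
    simp [hcdef, PiLp.inner_apply, RCLike.inner_apply, dotProduct, starRingEnd_apply,
      mul_comm]
  have hL'eq : ∀ z, L' z = f z xbar + (⟪c, z⟫ + k) + ∑ i, mu i * g z xbar i := by
    intro z
    simp only [hL'def, stmt2Lagr]
    rw [hinner, hkdef, show B *ᵥ xbar + A *ᵥ z - b = A *ᵥ z + (B *ᵥ xbar - b) from by abel,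
      dotProduct_add, Matrix.dotProduct_mulVec]
    rfl
  have hF1 : Differentiable ℝ (fun y : EuclideanSpace ℝ (Fin n) => f y xbar) :=
    hfdiff.comp (differentiable_id.prodMk (differentiable_const xbar))
  have hGi : ∀ i, Differentiable ℝ (fun y : EuclideanSpace ℝ (Fin n) => g y xbar i) := fun i =>
    (hgdiff i).comp (differentiable_id.prodMk (differentiable_const xbar))
  set Φ : EuclideanSpace ℝ (Fin n) → (EuclideanSpace ℝ (Fin n) →L[ℝ] ℝ) := fun y =>
    fderiv ℝ (fun y' => f y' xbar) y + innerSL ℝ c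
      + ∑ i, mu i • fderiv ℝ (fun y' => g y' xbar i) y with hΦdef
  have hΦ : ∀ y, HasFDerivAt L' (Φ y) y := by
    intro y
    have h1 : HasFDerivAt (fun y' => f y' xbar) (fderiv ℝ (fun y' => f y' xbar) y) y :=
      (hF1 y).hasFDerivAt
    have h2 : HasFDerivAt (fun z : EuclideanSpace ℝ (Fin n) => ⟪c, z⟫ + k) (innerSL ℝ c) y := by
      exact ((innerSL ℝ c).hasFDerivAt).add_const k
    have h3 : HasFDerivAt (fun z : EuclideanSpace ℝ (Fin n) => ∑ i, mu i * g z xbar i)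
        (∑ i, mu i • fderiv ℝ (fun y' => g y' xbar i) y) y :=
      HasFDerivAt.fun_sum fun i _ => ((hGi i y).hasFDerivAt).const_mul (mu i)
    have h4 := (h1.add h2).add h3
    have he : L' = fun z => f z xbar + (⟪c, z⟫ + k) + ∑ i, mu i * g z xbar i := funext hL'eq
    rw [he, hΦdef]
    exact h4
  have hgradL : ∀ y, gradient L' y
      = (InnerProductSpace.toDual ℝ (EuclideanSpace ℝ (Fin n))).symm (Φ y) := by
    intro y
    unfold gradient
    rw [(hΦ y).fderiv]
  have hpair : ∀ y v, ⟪gradient L' y, v⟫ = Φ y v := by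
    intro y v
    rw [hgradL y]
    exact InnerProductSpace.toDual_symm_apply
  -- bound on the sum of multipliers
  set c₀ : ℝ := Finset.univ.inf' Finset.univ_nonempty (fun i => -(g yx xbar i)) with hc₀def
  have hc₀pos : 0 < c₀ := by
    rw [hc₀def, Finset.lt_inf'_iff]
    exact fun i _ => neg_pos.mpr (hyxstrict i)
  have hzero : B *ᵥ xbar + A *ᵥ yx - b = 0 := by
    rw [← hyxfeas]; abel
  have hLyx : L' yx = f yx xbar + ∑ i, mu i * g yx xbar i := by
    simp only [hL'def, stmt2Lagr, hzero, dotProduct_zero, add_zero, dotProduct,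
      Pi.zero_apply, mul_zero, Finset.sum_const_zero]
  have hge : Q xbar - ε ≤ L' yx := hdualopt yx hyxY
  have hS0 : 0 ≤ ∑ i, mu i := Finset.sum_nonneg fun i _ => hmu i
  have hsum_le : ∑ i, mu i * g yx xbar i ≤ -(c₀ * ∑ i, mu i) := by
    have hb : ∀ i ∈ Finset.univ, mu i * g yx xbar i ≤ mu i * (-c₀) := by
      intro i _
      have h8 : c₀ ≤ -(g yx xbar i) := hc₀def ▸ Finset.inf'_le _ (Finset.mem_univ i)
      exact mul_le_mul_of_nonneg_left (by linarith) (hmu i)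
    calc ∑ i, mu i * g yx xbar i ≤ ∑ i, mu i * (-c₀) := Finset.sum_le_sum hb
      _ = -(c₀ * ∑ i, mu i) := by rw [← Finset.sum_mul]; ring
  have hSU : (∑ i, mu i) ≤ U := by
    rw [hU, le_div_iff₀ hc₀pos]
    nlinarith [hge, hLyx, hsum_le, hLbar]
  have hM₃pos : 0 < M₃ := by
    rw [hM₃]
    have h9 : 0 ≤ U * M₂ := mul_nonneg (hS0.trans hSU) hM₂.le
    linarith
  -- Lipschitz bound on the gradient of L'
  have hGlip : ∀ y₁ ∈ Y, ∀ y₂ ∈ Y, ‖gradient L' y₂ - gradient L' y₁‖ ≤ M₃ * ‖y₂ - y₁‖ := by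
    intro y₁ h₁ y₂ h₂
    have hΦsub : Φ y₂ - Φ y₁
        = (fderiv ℝ (fun y' => f y' xbar) y₂ - fderiv ℝ (fun y' => f y' xbar) y₁)
          + ∑ i, mu i • (fderiv ℝ (fun y' => g y' xbar i) y₂
              - fderiv ℝ (fun y' => g y' xbar i) y₁) := by
      simp only [hΦdef, smul_sub, Finset.sum_sub_distrib]
      abel
    have hdiff : gradient L' y₂ - gradient L' y₁ =
        (gradient (fun y' => f y' xbar) y₂ - gradient (fun y' => f y' xbar) y₁)
        + ∑ i, mu i • (gradient (fun y' => g y' xbar i) y₂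
            - gradient (fun y' => g y' xbar i) y₁) := by
      rw [hgradL, hgradL, ← map_sub, hΦsub, map_add, map_sub, map_sum]
      simp only [_root_.map_smul, map_sub]
      rfl
    have h5 : ‖∑ i, mu i • (gradient (fun y' => g y' xbar i) y₂
        - gradient (fun y' => g y' xbar i) y₁)‖ ≤ ∑ i, mu i * (M₂ * ‖y₂ - y₁‖) := by
      refine (norm_sum_le _ _).trans (Finset.sum_le_sum fun i _ => ?_)
      rw [norm_smul, Real.norm_of_nonneg (hmu i)]
      exact mul_le_mul_of_nonneg_left (hggradlip i xbar hxbar y₁ h₁ y₂ h₂) (hmu i)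
    have h6 := hfgradlip xbar hxbar y₁ h₁ y₂ h₂
    have h7 : ∑ i, mu i * (M₂ * ‖y₂ - y₁‖) = (∑ i, mu i) * (M₂ * ‖y₂ - y₁‖) :=
      (Finset.sum_mul ..).symm
    rw [hdiff]
    refine (norm_add_le _ _).trans ?_
    rw [h7] at h5
    have h10 : (∑ i, mu i) * (M₂ * ‖y₂ - y₁‖) ≤ U * (M₂ * ‖y₂ - y₁‖) :=
      mul_le_mul_of_nonneg_right hSU (by positivity)
    rw [hM₃]
    linarith [h5, h6, h10]
  -- descent lemma
  have hdescent : ∀ z ∈ Y, L' z ≤ L' yhat + Φ yhat (z - yhat) + M₃ / 2 * ‖z - yhat‖ ^ 2 := by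
    intro z hz
    set d := z - yhat with hddef
    have hseg : ∀ t : ℝ, t ∈ Set.Icc (0:ℝ) 1 → yhat + t • d ∈ Y := by
      intro t ht
      have h := hYconv hyhatY hz (by linarith [ht.2] : (0:ℝ) ≤ 1 - t) ht.1 (by ring)
      have e : yhat + t • d = (1 - t) • yhat + t • z := by rw [hddef]; module
      rw [e]; exact h
    have hderiv : ∀ t : ℝ, HasDerivAt (fun s : ℝ => L' (yhat + s • d)) (Φ (yhat + t • d) d) t := by
      intro t
      have h1 : HasDerivAt (fun s : ℝ => yhat + s • d) d t := by
        simpa using ((hasDerivAt_id t).smul_const d).const_add yhat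
      exact (hΦ (yhat + t • d)).comp_hasDerivAt t h1
    have hlipcont : ContinuousOn (fun t : ℝ => Φ (yhat + t • d) d) (Set.Icc 0 1) := by
      have hlip : LipschitzOnWith (Real.toNNReal (M₃ * ‖d‖ ^ 2))
          (fun t : ℝ => Φ (yhat + t • d) d) (Set.Icc 0 1) := by
        apply LipschitzOnWith.of_dist_le'
        intro s hs t ht
        rw [Real.dist_eq, Real.dist_eq]
        have e1 : Φ (yhat + s • d) d - Φ (yhat + t • d) d
            = ⟪gradient L' (yhat + s • d) - gradient L' (yhat + t • d), d⟫ := by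
          rw [inner_sub_left, hpair, hpair]
        calc |Φ (yhat + s • d) d - Φ (yhat + t • d) d|
            ≤ ‖gradient L' (yhat + s • d) - gradient L' (yhat + t • d)‖ * ‖d‖ := by
              rw [e1]; exact abs_real_inner_le_norm _ _
          _ ≤ (M₃ * ‖(yhat + s • d) - (yhat + t • d)‖) * ‖d‖ :=
              mul_le_mul_of_nonneg_right
                (hGlip (yhat + t • d) (hseg t ht) (yhat + s • d) (hseg s hs)) (norm_nonneg d)
          _ = M₃ * ‖d‖ ^ 2 * |s - t| := by
              have e2 : (yhat + s • d) - (yhat + t • d) = (s - t) • d := by module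
              rw [e2, norm_smul, Real.norm_eq_abs]; ring
      exact hlip.continuousOn
    have hint : IntervalIntegrable (fun t : ℝ => Φ (yhat + t • d) d) MeasureTheory.volume 0 1 := by
      apply ContinuousOn.intervalIntegrable
      rwa [Set.uIcc_of_le zero_le_one]
    have hFTC : ∫ t in (0:ℝ)..1, Φ (yhat + t • d) d = L' z - L' yhat := by
      have h := intervalIntegral.integral_eq_sub_of_hasDerivAt (fun t _ => hderiv t) hint
      simp only [one_smul, zero_smul, add_zero] at h
      rwa [show yhat + d = z by rw [hddef]; abel] at h
    have hptbound : ∀ t ∈ Set.Icc (0:ℝ) 1,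
        Φ (yhat + t • d) d ≤ Φ yhat d + M₃ * ‖d‖ ^ 2 * t := by
      intro t ht
      have e1 : Φ (yhat + t • d) d - Φ yhat d
          = ⟪gradient L' (yhat + t • d) - gradient L' yhat, d⟫ := by
        rw [inner_sub_left, hpair, hpair]
      have h2 : ⟪gradient L' (yhat + t • d) - gradient L' yhat, d⟫
          ≤ ‖gradient L' (yhat + t • d) - gradient L' yhat‖ * ‖d‖ := real_inner_le_norm _ _
      have h3 : ‖gradient L' (yhat + t • d) - gradient L' yhat‖ ≤ M₃ * (t * ‖d‖) := by
        have h4 := hGlip yhat hyhatY (yhat + t • d) (hseg t ht)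
        have e2 : (yhat + t • d) - yhat = t • d := by module
        rwa [e2, norm_smul, Real.norm_eq_abs, abs_of_nonneg ht.1] at h4
      nlinarith [norm_nonneg d]
    have hint2 : IntervalIntegrable (fun t : ℝ => Φ yhat d + M₃ * ‖d‖ ^ 2 * t)
        MeasureTheory.volume 0 1 :=
      ((by fun_prop : Continuous fun t : ℝ => Φ yhat d + M₃ * ‖d‖ ^ 2 * t).intervalIntegrable 0 1)
    have hintmono : ∫ t in (0:ℝ)..1, Φ (yhat + t • d) d
        ≤ ∫ t in (0:ℝ)..1, (Φ yhat d + M₃ * ‖d‖ ^ 2 * t) :=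
      intervalIntegral.integral_mono_on zero_le_one hint hint2 hptbound
    have hrhs : ∫ t in (0:ℝ)..1, (Φ yhat d + M₃ * ‖d‖ ^ 2 * t)
        = Φ yhat d + M₃ * ‖d‖ ^ 2 / 2 := by
      rw [intervalIntegral.integral_add intervalIntegrable_const
        ((by fun_prop : Continuous fun t : ℝ => M₃ * ‖d‖ ^ 2 * t).intervalIntegrable 0 1),
        intervalIntegral.integral_const_mul, integral_id]
      simp
      ring
    rw [hrhs, hFTC] at hintmono
    linarith
  -- the maximizer
  have hvalcont : Continuous (fun y : EuclideanSpace ℝ (Fin n) => ⟪gradient L' yhat, yhat - y⟫) :=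
    Continuous.inner continuous_const (continuous_const.sub continuous_id)
  obtain ⟨ystar, hystarY, hmax⟩ := hYcomp.exists_isMaxOn hYne hvalcont.continuousOn
  have hℓeq : ℓ = ⟪gradient L' yhat, yhat - ystar⟫ := by
    refine le_antisymm (hℓ.2 ?_) (hℓ.1 ⟨ystar, hystarY, rfl⟩)
    rintro v ⟨y, hy, rfl⟩
    exact (isMaxOn_iff.1 hmax) y hy
  have hℓnn : 0 ≤ ℓ := hℓ.1 ⟨yhat, hyhatY, by rw [sub_self, inner_zero_right]⟩
  have hΦstar : Φ yhat (ystar - yhat) = -ℓ := by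
    rw [← hpair]
    have e : ystar - yhat = -(yhat - ystar) := by abel
    rw [e, inner_neg_right, hℓeq]
  set D := Metric.diam Y with hDdef
  have hD0 : 0 ≤ D := Metric.diam_nonneg
  have hdist : ‖ystar - yhat‖ ≤ D := by
    rw [← dist_eq_norm]
    exact Metric.dist_le_diam_of_mem hYcomp.isBounded hystarY hyhatY
  have master : ∀ t ∈ Set.Icc (0:ℝ) 1,
      Q xbar - ε ≤ L' yhat - t * ℓ + M₃ / 2 * (t ^ 2 * D ^ 2) := by
    intro t ht
    have hyt : yhat + t • (ystar - yhat) ∈ Y := by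
      have h := hYconv hyhatY hystarY (by linarith [ht.2] : (0:ℝ) ≤ 1 - t) ht.1 (by ring)
      have e : yhat + t • (ystar - yhat) = (1 - t) • yhat + t • ystar := by module
      rw [e]; exact h
    have h1 : Q xbar - ε ≤ L' (yhat + t • (ystar - yhat)) := hdualopt _ hyt
    have h2 := hdescent _ hyt
    have e1 : (yhat + t • (ystar - yhat)) - yhat = t • (ystar - yhat) := by module
    rw [e1, ContinuousLinearMap.map_smul, hΦstar] at h2
    have e2 : ‖t • (ystar - yhat)‖ ^ 2 = t ^ 2 * ‖ystar - yhat‖ ^ 2 := by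
      rw [norm_smul, Real.norm_eq_abs, mul_pow, sq_abs]
    rw [e2] at h2
    have e3 : t ^ 2 * ‖ystar - yhat‖ ^ 2 ≤ t ^ 2 * D ^ 2 :=
      mul_le_mul_of_nonneg_left (pow_le_pow_left₀ (norm_nonneg _) hdist 2) (sq_nonneg t)
    have e4 := mul_le_mul_of_nonneg_left e3 (by linarith : (0:ℝ) ≤ M₃ / 2)
    have e5 : t • (-ℓ) = -(t * ℓ) := by rw [smul_eq_mul]; ring
    rw [e5] at h2
    linarith
  rw [show stmt2Lagr A B b f g lam mu yhat xbar = L' yhat from rfl]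
  split_ifs with hcase
  · by_cases hDpos : 0 < D
    · have ha : 0 < M₃ * D ^ 2 := by positivity
      have ht₀mem : ℓ / (M₃ * D ^ 2) ∈ Set.Icc (0:ℝ) 1 :=
        ⟨div_nonneg hℓnn ha.le, (div_le_one ha).2 hcase⟩
      have h := master _ ht₀mem
      have e1 : (ℓ / (M₃ * D ^ 2)) * ℓ = ℓ ^ 2 / (M₃ * D ^ 2) := by ring
      have e2 : M₃ / 2 * ((ℓ / (M₃ * D ^ 2)) ^ 2 * D ^ 2) = ℓ ^ 2 / (2 * (M₃ * D ^ 2)) := by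
        field_simp
      have e3 : ℓ ^ 2 / (M₃ * D ^ 2) = 2 * (ℓ ^ 2 / (2 * (M₃ * D ^ 2))) := by
        field_simp
      have e4 : ℓ ^ 2 / (2 * M₃ * D ^ 2) = ℓ ^ 2 / (2 * (M₃ * D ^ 2)) := by rw [mul_assoc]
      rw [e1, e2] at h
      linarith
    · have hDz : D = 0 := le_antisymm (not_lt.1 hDpos) hD0
      have hℓ0 : ℓ = 0 := le_antisymm (by rw [hDz] at hcase; simpa using hcase) hℓnn
      have h := master 0 ⟨le_refl 0, zero_le_one⟩
      simp only [zero_mul, pow_two, mul_zero, zero_mul, sub_zero, add_zero] at h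
      rw [hℓ0, hDz]
      norm_num
      linarith
  · have hlt : M₃ * D ^ 2 < ℓ := not_le.1 hcase
    have h := master 1 ⟨zero_le_one, le_refl 1⟩
    simp only [one_mul, one_pow] at h
    linarith
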